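/- Let E be a directed graph in which some vertex v is the base of two distinct cycles g and h. Then E contains an infinite path that is not tail-equivalent to any rational (eventually periodic) path. -/

import Mathlib

/-- A directed graph: vertices, edges, source and target (range) maps. -/
structure DGraph where
  V : Type
  E : Type
  src : E → V
  tgt : E → V

namespace DGraph

/-- There is a (possibly empty) directed path from `u` to `w`. -/
def Reaches (G : DGraph) (u w : G.V) : Prop :=
  Relation.ReflTransGen (fun a b => ∃ e : G.E, G.src e = a ∧ G.tgt e = b) u w

/-- A nonempty list of composable edges, closed, not passing through any vertex twice. -/
def IsCycle (G : DGraph) (p : List G.E) : Prop :=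
  p ≠ [] ∧ List.Chain' (fun e f => G.tgt e = G.src f) p ∧
    p.getLast?.map G.tgt = p.head?.map G.src ∧ (p.map G.src).Nodup

/-- The preorder on cycles: `c ≥ c'` iff some vertex of `c` reaches some vertex of `c'`. -/
def CycleGe (G : DGraph) (c c' : List G.E) : Prop :=
  ∃ u w : G.V, u ∈ c.map G.src ∧ w ∈ c'.map G.src ∧ G.Reaches u w

/-- Two cycles are the same cycle iff one is a rotation of the other. -/
def IsRotation (G : DGraph) (c c' : List G.E) : Prop :=
  ∃ n : ℕ, c' = c.rotate n

/-- An infinite path, as a coherent sequence of edges. -/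
def IsInfPath (G : DGraph) (p : ℕ → G.E) : Prop :=
  ∀ n : ℕ, G.tgt (p n) = G.src (p (n + 1))

/-- A rational infinite path: `g g g ⋯` for a (finite, nonempty, closed) path `g`. -/
def IsRational (G : DGraph) (q : ℕ → G.E) : Prop :=
  ∃ (g : List G.E) (hg : g ≠ []),
    List.Chain' (fun e f => G.tgt e = G.src f) g ∧
    g.getLast?.map G.tgt = g.head?.map G.src ∧
    ∀ k : ℕ, q k = g.get ⟨k % g.length, Nat.mod_lt _ (List.length_pos_iff.mpr hg)⟩

/-- Tail equivalence of infinite paths. -/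
def TailEquiv (G : DGraph) (p q : ℕ → G.E) : Prop :=
  ∃ m n : ℕ, ∀ k : ℕ, p (m + k) = q (n + k)

end DGraph



section CycAux

def cyc {α : Type} (l : List α) (hl : l ≠ []) (i : ℕ) : α :=
  l.get ⟨i % l.length, Nat.mod_lt _ (List.length_pos_iff.mpr hl)⟩

lemma cyc_congr {α : Type} (l : List α) (hl : l ≠ []) {i j : ℕ}
    (hij : i % l.length = j % l.length) : cyc l hl i = cyc l hl j := by
  simp only [cyc, hij]

lemma cyc_eq_of {α : Type} (l : List α) (hl : l ≠ []) (i : ℕ) {j : ℕ}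
    (hij : i % l.length = j) (hj : j < l.length) : cyc l hl i = l.get ⟨j, hj⟩ := by
  simp only [cyc]
  congr 1
  exact Fin.ext hij

lemma cyc_zero {α : Type} (l : List α) (hl : l ≠ []) :
    cyc l hl 0 = l.head hl := by
  rw [cyc_eq_of l hl 0 (Nat.zero_mod _) (List.length_pos_iff.mpr hl)]
  exact (List.head_eq_getElem_zero hl).symm

lemma cyc_inj {α β : Type} {f : α → β} {l : List α} (hl : l ≠ [])
    (hnd : (l.map f).Nodup) {i j : ℕ} (hij : cyc l hl i = cyc l hl j) :
    i % l.length = j % l.length := by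
  have h1 : (l.map f).get ⟨i % l.length, by simpa using Nat.mod_lt _ (List.length_pos_iff.mpr hl)⟩ =
      (l.map f).get ⟨j % l.length, by simpa using Nat.mod_lt _ (List.length_pos_iff.mpr hl)⟩ := by
    simp only [List.get_eq_getElem, List.getElem_map]
    exact congrArg f hij
  have h2 := (List.Nodup.get_inj_iff hnd).mp h1
  simpa using congrArg Fin.val h2

lemma cyc_chain {α β : Type} {t s : α → β} {l : List α} (hl : l ≠ [])
    (hc : List.Chain' (fun e f => t e = s f) l)
    (hcl : l.getLast?.map t = l.head?.map s) (i : ℕ) :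
    t (cyc l hl i) = s (cyc l hl (i + 1)) := by
  set L := l.length with hL
  have hLpos : 0 < L := List.length_pos_iff.mpr hl
  have hmod : i % L < L := Nat.mod_lt _ hLpos
  have haux : (i + 1) % L = (i % L + 1) % L := by
    rw [Nat.add_mod, Nat.add_mod_mod]
  by_cases hlt : i % L + 1 < L
  · have h2 : (i + 1) % L = i % L + 1 := by rw [haux, Nat.mod_eq_of_lt hlt]
    rw [cyc_eq_of l hl i rfl hmod, cyc_eq_of l hl (i+1) h2 hlt]
    exact List.isChain_iff_getElem.mp hc (i % L) (by omega)
  · have hfull : i % L + 1 = L := by omega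
    have h2 : (i + 1) % L = 0 := by rw [haux, hfull, Nat.mod_self]
    rw [cyc_eq_of l hl i (by omega : i % L = L - 1) (by omega),
        cyc_eq_of l hl (i+1) h2 hLpos]
    have hlast : l.getLast? = some (l.get ⟨L - 1, by omega⟩) := by
      rw [List.getLast?_eq_getLast hl]
      congr 1
      exact List.getLast_eq_getElem hl
    have hhead : l.head? = some (l.get ⟨0, by omega⟩) := by
      rw [List.head?_eq_head hl]
      congr 1
      exact List.head_eq_getElem_zero hl
    rw [hlast, hhead] at hcl
    simpa using hcl

end CycAux

section StAux

/-- start position of block `n`; block `n` is `g^(n+1) h^(n+1)`, of length `(n+1)*c`. -/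
def st (c : ℕ) : ℕ → ℕ
  | 0 => 0
  | n + 1 => st c n + (n + 1) * c

lemma st_succ (c n : ℕ) : st c (n + 1) = st c n + (n + 1) * c := rfl

lemma le_st {c : ℕ} (hc : 0 < c) (n : ℕ) : n ≤ st c n := by
  induction n with
  | zero => simp [st]
  | succ n ih =>
    rw [st_succ]
    have : n + 1 ≤ (n + 1) * c := Nat.le_mul_of_pos_right _ hc
    omega

lemma st_mono {c : ℕ} : Monotone (st c) := by
  apply monotone_nat_of_le_succ
  intro n
  rw [st_succ]
  omega

lemma exists_blk {c : ℕ} (hc : 0 < c) (k : ℕ) : ∃ n, k < st c (n + 1) :=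
  ⟨k, lt_of_lt_of_le (Nat.lt_succ_self k) (le_st hc (k + 1))⟩

def blk (c : ℕ) (hc : 0 < c) (k : ℕ) : ℕ := Nat.find (exists_blk hc k)

lemma blk_eq {c : ℕ} (hc : 0 < c) {n k : ℕ} (h1 : st c n ≤ k) (h2 : k < st c (n + 1)) :
    blk c hc k = n := by
  rw [blk, Nat.find_eq_iff]
  refine ⟨h2, fun m hm hmk => ?_⟩
  exact absurd hmk (not_lt.mpr (le_trans (st_mono (by omega : m + 1 ≤ n)) h1))

lemma blk_spec {c : ℕ} (hc : 0 < c) (k : ℕ) :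
    st c (blk c hc k) ≤ k ∧ k < st c (blk c hc k + 1) := by
  constructor
  · rcases Nat.eq_zero_or_pos (blk c hc k) with h0 | h0
    · rw [h0]; exact Nat.zero_le k
    · have hlt : blk c hc k - 1 < Nat.find (exists_blk hc k) := by
        rw [← blk]; omega; exact hc
      have := Nat.find_min (exists_blk hc k) hlt
      have h2 : blk c hc k - 1 + 1 = blk c hc k := by omega
      rw [h2] at this
      omega
  · exact Nat.find_spec (exists_blk hc k)

end StAux

section PthAux

variable {α : Type}

lemma clen_pos {g h : List α} (hg : g ≠ []) (hh : h ≠ []) : 0 < g.length + h.length := by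
  have := List.length_pos_iff.mpr hg
  omega

/-- The path `g h g² h² g³ h³ ⋯`. -/
def pth (g h : List α) (hg : g ≠ []) (hh : h ≠ []) (k : ℕ) : α :=
  if k - st (g.length + h.length) (blk (g.length + h.length) (clen_pos hg hh) k)
      < (blk (g.length + h.length) (clen_pos hg hh) k + 1) * g.length
  then cyc g hg (k - st (g.length + h.length) (blk (g.length + h.length) (clen_pos hg hh) k))
  else cyc h hh (k - st (g.length + h.length) (blk (g.length + h.length) (clen_pos hg hh) k)
        - (blk (g.length + h.length) (clen_pos hg hh) k + 1) * g.length)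

lemma pth_g {g h : List α} (hg : g ≠ []) (hh : h ≠ []) {n j : ℕ}
    (hj : j < (n + 1) * g.length) :
    pth g h hg hh (st (g.length + h.length) n + j) = cyc g hg j := by
  have hc := clen_pos hg hh
  have hb : blk (g.length + h.length) hc (st (g.length + h.length) n + j) = n := by
    apply blk_eq hc (Nat.le_add_right _ _)
    rw [st_succ]
    have : (n + 1) * g.length ≤ (n + 1) * (g.length + h.length) :=
      Nat.mul_le_mul_left _ (Nat.le_add_right _ _)
    omega
  rw [pth, hb]
  simp only [Nat.add_sub_cancel_left]
  rw [if_pos hj]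

lemma pth_h {g h : List α} (hg : g ≠ []) (hh : h ≠ []) {n j : ℕ}
    (h1 : (n + 1) * g.length ≤ j) (h2 : j < (n + 1) * (g.length + h.length)) :
    pth g h hg hh (st (g.length + h.length) n + j) = cyc h hh (j - (n + 1) * g.length) := by
  have hc := clen_pos hg hh
  have hb : blk (g.length + h.length) hc (st (g.length + h.length) n + j) = n := by
    apply blk_eq hc (Nat.le_add_right _ _)
    rw [st_succ]
    omega
  rw [pth, hb]
  simp only [Nat.add_sub_cancel_left]
  rw [if_neg (by omega)]

end PthAux

section Key

variable {α β : Type} {f : α → β}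

lemma mod_eq_zero_of_dvd' {a x : ℕ} (h : a ∣ x) : x % a = 0 := by
  obtain ⟨t, rfl⟩ := h
  exact Nat.mul_mod_right a t

lemma cyc_eq_cyc_zero {l : List α} (hl : l ≠ []) {x : ℕ} (h : l.length ∣ x) :
    cyc l hl x = cyc l hl 0 := by
  apply cyc_congr
  rw [mod_eq_zero_of_dvd' h, Nat.zero_mod]

/-- The key combinatorial lemma: `pth g h` is not eventually periodic. -/
lemma pth_not_periodic (g h : List α) (hgne : g ≠ []) (hhne : h ≠ [])
    (hgnd : (g.map f).Nodup) (hhnd : (h.map f).Nodup) (hne : g ≠ h)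
    (L m : ℕ) (hL : 0 < L)
    (hper : ∀ k, m ≤ k → pth g h hgne hhne (k + L) = pth g h hgne hhne k) : False := by
  have ha : 0 < g.length := List.length_pos_iff.mpr hgne
  have hb : 0 < h.length := List.length_pos_iff.mpr hhne
  have hc : 0 < g.length + h.length := by omega
  set n := m + L with hndef
  set s := st (g.length + h.length) n with hsdef
  have hsm : m ≤ s := le_trans (by omega) (le_st hc n)
  have hA : L < (n + 1) * g.length := lt_of_lt_of_le (by omega) (Nat.le_mul_of_pos_right _ ha)
  have hB : L < (n + 1) * h.length := lt_of_lt_of_le (by omega) (Nat.le_mul_of_pos_right _ hb)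
  have hca : (n + 1) * (g.length + h.length) = (n + 1) * g.length + (n + 1) * h.length := by
    ring
  have hdvdA : g.length ∣ (n + 1) * g.length := Dvd.intro_left _ rfl
  have hdvdB : h.length ∣ (n + 1) * h.length := Dvd.intro_left _ rfl
  have haa : g.length ≤ (n + 1) * g.length := Nat.le_mul_of_pos_left _ (by omega)
  have hbb : h.length ≤ (n + 1) * h.length := Nat.le_mul_of_pos_left _ (by omega)
  -- (i) g.length ∣ L
  have p1 : pth g h hgne hhne (s + L) = cyc g hgne L := pth_g hgne hhne hA
  have p2 : pth g h hgne hhne s = cyc g hgne 0 := by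
    have := pth_g hgne hhne (n := n) (j := 0) (Nat.mul_pos (by omega) ha)
    simpa using this
  have hda : g.length ∣ L := by
    apply Nat.dvd_of_mod_eq_zero
    have := cyc_inj (f := f) hgne hgnd (p1.symm.trans ((hper s hsm).trans p2))
    simpa using this
  have haL : g.length ≤ L := Nat.le_of_dvd hL hda
  -- (ii) h.length ∣ L
  have q1 : pth g h hgne hhne (s + (n + 1) * g.length) = cyc h hhne 0 := by
    have := pth_h hgne hhne (n := n) (le_refl ((n + 1) * g.length)) (by omega)
    simpa using this
  have q2 : pth g h hgne hhne (s + ((n + 1) * g.length + L)) = cyc h hhne L := by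
    have := pth_h hgne hhne (n := n) (j := (n + 1) * g.length + L) (by omega) (by omega)
    rw [show (n + 1) * g.length + L - (n + 1) * g.length = L from by omega] at this
    exact this
  have q3 : pth g h hgne hhne (s + ((n + 1) * g.length + L)) =
      pth g h hgne hhne (s + (n + 1) * g.length) := by
    have := hper (s + (n + 1) * g.length) (by omega)
    rw [show s + (n + 1) * g.length + L = s + ((n + 1) * g.length + L) from by omega] at this
    exact this
  have hdb : h.length ∣ L := by
    apply Nat.dvd_of_mod_eq_zero
    have := cyc_inj (f := f) hhne hhnd (q2.symm.trans (q3.trans q1))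
    simpa using this
  have hbL : h.length ≤ L := Nat.le_of_dvd hL hdb
  -- (iii) cyc h 0 = cyc g 0
  have u1 : pth g h hgne hhne (s + ((n + 1) * g.length - L)) = cyc g hgne 0 := by
    rw [pth_g hgne hhne (n := n) (by omega)]
    exact cyc_eq_cyc_zero hgne (Nat.dvd_sub hdvdA hda)
  have u3 : pth g h hgne hhne (s + (n + 1) * g.length) =
      pth g h hgne hhne (s + ((n + 1) * g.length - L)) := by
    have := hper (s + ((n + 1) * g.length - L)) (by omega)
    rw [show s + ((n + 1) * g.length - L) + L = s + (n + 1) * g.length from by omega] at this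
    exact this
  have E0 : cyc h hhne 0 = cyc g hgne 0 := q1.symm.trans (u3.trans u1)
  rcases lt_trichotomy g.length h.length with hab | hab | hab
  · -- g.length < h.length : contradiction via h[a] = h[0]
    have q4 : pth g h hgne hhne (s + ((n + 1) * g.length + g.length)) = cyc h hhne g.length := by
      have := pth_h hgne hhne (n := n) (j := (n + 1) * g.length + g.length)
        (by omega) (by omega)
      rw [show (n + 1) * g.length + g.length - (n + 1) * g.length = g.length
        from by omega] at this
      exact this
    have q5 : pth g h hgne hhne (s + ((n + 1) * g.length + g.length - L)) = cyc g hgne 0 := by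
      rw [pth_g hgne hhne (n := n) (by omega)]
      exact cyc_eq_cyc_zero hgne (Nat.dvd_sub (Dvd.dvd.add hdvdA dvd_rfl) hda)
    have q6 : pth g h hgne hhne (s + ((n + 1) * g.length + g.length)) =
        pth g h hgne hhne (s + ((n + 1) * g.length + g.length - L)) := by
      have := hper (s + ((n + 1) * g.length + g.length - L)) (by omega)
      rw [show s + ((n + 1) * g.length + g.length - L) + L
          = s + ((n + 1) * g.length + g.length) from by omega] at this
      exact this
    have hcontra : cyc h hhne g.length = cyc h hhne 0 :=
      (q4.symm.trans (q6.trans q5)).trans E0.symm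
    have := cyc_inj (f := f) hhne hhnd hcontra
    rw [Nat.mod_eq_of_lt hab, Nat.zero_mod] at this
    omega
  · -- g.length = h.length : g = h
    apply hne
    have heq : ∀ i, i < g.length → cyc g hgne i = cyc h hhne i := by
      intro i hi
      have hib : i < h.length := by omega
      have r1 : pth g h hgne hhne (s + ((n + 1) * g.length + i)) = cyc h hhne i := by
        have := pth_h hgne hhne (n := n) (j := (n + 1) * g.length + i) (by omega) (by omega)
        rw [show (n + 1) * g.length + i - (n + 1) * g.length = i from by omega] at this
        exact this
      have r2 : pth g h hgne hhne (s + ((n + 1) * g.length + i - L)) = cyc g hgne i := by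
        rw [pth_g hgne hhne (n := n) (by omega)]
        apply cyc_congr
        obtain ⟨t, ht⟩ := Nat.dvd_sub hdvdA hda
        rw [show (n + 1) * g.length + i - L = ((n + 1) * g.length - L) + i from by omega, ht,
            Nat.mul_add_mod]
      have r3 : pth g h hgne hhne (s + ((n + 1) * g.length + i)) =
          pth g h hgne hhne (s + ((n + 1) * g.length + i - L)) := by
        have := hper (s + ((n + 1) * g.length + i - L)) (by omega)
        rw [show s + ((n + 1) * g.length + i - L) + L = s + ((n + 1) * g.length + i)
          from by omega] at this
        exact this
      exact r2.symm.trans (r3.symm.trans r1)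
    apply List.ext_get (by omega)
    intro i h1 h2
    rw [← cyc_eq_of g hgne i (Nat.mod_eq_of_lt h1) h1,
        ← cyc_eq_of h hhne i (Nat.mod_eq_of_lt h2) h2]
    exact heq i h1
  · -- h.length < g.length : contradiction via g[b] = g[0] at block boundary
    have hs' : st (g.length + h.length) (n + 1) = s + (n + 1) * (g.length + h.length) :=
      st_succ _ _
    have hexp : (n + 1 + 1) * g.length = (n + 1) * g.length + g.length := by ring
    have w2 : pth g h hgne hhne (st (g.length + h.length) (n + 1) + h.length)
        = cyc g hgne h.length := by
      rw [pth_g hgne hhne (n := n + 1) (by omega)]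
    have w4 : pth g h hgne hhne (s + ((n + 1) * (g.length + h.length) + h.length - L))
        = cyc h hhne 0 := by
      rw [pth_h hgne hhne (n := n) (by omega) (by omega)]
      rw [show (n + 1) * (g.length + h.length) + h.length - L - (n + 1) * g.length
          = (n + 1) * h.length + h.length - L from by omega]
      exact cyc_eq_cyc_zero hhne (Nat.dvd_sub (Dvd.dvd.add hdvdB dvd_rfl) hdb)
    have w5 : pth g h hgne hhne (st (g.length + h.length) (n + 1) + h.length) =
        pth g h hgne hhne (s + ((n + 1) * (g.length + h.length) + h.length - L)) := by
      have := hper (s + ((n + 1) * (g.length + h.length) + h.length - L)) (by omega)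
      rw [show s + ((n + 1) * (g.length + h.length) + h.length - L) + L
          = st (g.length + h.length) (n + 1) + h.length from by rw [hs']; omega] at this
      exact this
    have hcontra : cyc g hgne h.length = cyc g hgne 0 :=
      (w2.symm.trans (w5.trans w4)).trans E0
    have := cyc_inj (f := f) hgne hgnd hcontra
    rw [Nat.mod_eq_of_lt hab, Nat.zero_mod] at this
    omega

end Key


section InfPath

variable {G : DGraph} {v : G.V} {g h : List G.E}

lemma pth_infPath (hgne : g ≠ []) (hhne : h ≠ [])
    (hgch : List.Chain' (fun e f => G.tgt e = G.src f) g)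
    (hhch : List.Chain' (fun e f => G.tgt e = G.src f) h)
    (hgcl : g.getLast?.map G.tgt = g.head?.map G.src)
    (hhcl : h.getLast?.map G.tgt = h.head?.map G.src)
    (hgv : g.head?.map G.src = some v) (hhv : h.head?.map G.src = some v) :
    G.IsInfPath (pth g h hgne hhne) := by
  intro k
  have hc := clen_pos hgne hhne (α := G.E)
  have ha : 0 < g.length := List.length_pos_iff.mpr hgne
  have hb : 0 < h.length := List.length_pos_iff.mpr hhne
  obtain ⟨hk1, hk2⟩ := blk_spec hc k
  set n := blk (g.length + h.length) hc k with hn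
  rw [st_succ] at hk2
  have hk : k = st (g.length + h.length) n + (k - st (g.length + h.length) n) := by omega
  set j := k - st (g.length + h.length) n with hjdef
  have hjc : j < (n + 1) * (g.length + h.length) := by omega
  have hca : (n + 1) * (g.length + h.length) = (n + 1) * g.length + (n + 1) * h.length := by ring
  have hbpos : 0 < (n + 1) * h.length := by positivity
  have hsg : G.src (g.head hgne) = v := by
    rw [List.head?_eq_head hgne] at hgv; simpa using hgv
  have hsh : G.src (h.head hhne) = v := by
    rw [List.head?_eq_head hhne] at hhv; simpa using hhv
  have hsucc : k + 1 = st (g.length + h.length) n + (j + 1) := by omega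
  by_cases c1 : j + 1 < (n + 1) * g.length
  · rw [hk, Nat.add_assoc, pth_g hgne hhne (by omega), pth_g hgne hhne c1]
    exact cyc_chain hgne hgch hgcl j
  · by_cases c2 : j < (n + 1) * g.length
    · -- j + 1 = (n+1) * g.length : g → h boundary inside block
      have hj1 : j + 1 = (n + 1) * g.length := by omega
      rw [hk, Nat.add_assoc, pth_g hgne hhne c2, pth_h hgne hhne (by omega) (by omega)]
      have e1 : G.tgt (cyc g hgne j) = G.src (cyc g hgne (j + 1)) :=
        cyc_chain hgne hgch hgcl j
      have e2 : cyc g hgne (j + 1) = cyc g hgne 0 := by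
        apply cyc_congr
        rw [hj1, Nat.mul_mod_left, Nat.zero_mod]
      have e3 : cyc h hhne (j + 1 - (n + 1) * g.length) = cyc h hhne 0 := by
        rw [show j + 1 - (n + 1) * g.length = 0 from by omega]
      rw [e1, e2, e3, cyc_zero, cyc_zero, hsg, hsh]
    · by_cases c3 : j + 1 < (n + 1) * (g.length + h.length)
      · -- inside h part
        rw [hk, Nat.add_assoc, pth_h hgne hhne (by omega) (by omega),
            pth_h hgne hhne (by omega) c3]
        rw [show j + 1 - (n + 1) * g.length = (j - (n + 1) * g.length) + 1 from by omega]
        exact cyc_chain hhne hhch hhcl _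
      · -- block boundary : h → g
        have hj1 : j + 1 = (n + 1) * (g.length + h.length) := by omega
        rw [hk, Nat.add_assoc,
            show st (g.length + h.length) n + (j + 1) =
              st (g.length + h.length) (n + 1) + 0 from by rw [st_succ]; omega,
            pth_h hgne hhne (by omega) (by omega),
            pth_g hgne hhne (by positivity)]
        have e1 : G.tgt (cyc h hhne (j - (n + 1) * g.length)) =
            G.src (cyc h hhne (j - (n + 1) * g.length + 1)) :=
          cyc_chain hhne hhch hhcl _
        have e2 : cyc h hhne (j - (n + 1) * g.length + 1) = cyc h hhne 0 := by
          apply cyc_congr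
          rw [show j - (n + 1) * g.length + 1 = (n + 1) * h.length from by omega,
              Nat.mul_mod_left, Nat.zero_mod]
        rw [e1, e2, cyc_zero, cyc_zero, hsg, hsh]

end InfPath

/-- If a vertex `v` is the base of two distinct cycles `g` and `h`, then the
graph contains an infinite path that is not tail-equivalent to any rational path
(witness: `p = g h g² h² ⋯`). -/

theorem stmt8 (G : DGraph) (v : G.V) (g h : List G.E)
    (hg : G.IsCycle g) (hh : G.IsCycle h)
    (hgv : g.head?.map G.src = some v) (hhv : h.head?.map G.src = some v)
    (hne : g ≠ h) :
    ∃ p : ℕ → G.E, G.IsInfPath p ∧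
      ∀ q : ℕ → G.E, G.IsRational q → ¬ G.TailEquiv p q := by
  obtain ⟨hgne, hgch, hgcl, hgnd⟩ := hg
  obtain ⟨hhne, hhch, hhcl, hhnd⟩ := hh
  refine ⟨pth g h hgne hhne, pth_infPath hgne hhne hgch hhch hgcl hhcl hgv hhv, ?_⟩
  rintro q ⟨w, hwne, hwch, hwcl, hwval⟩ ⟨m, n0, htail⟩
  have hL : 0 < w.length := List.length_pos_iff.mpr hwne
  have hper : ∀ k, m ≤ k → pth g h hgne hhne (k + w.length) = pth g h hgne hhne k := by
    intro k hk
    have e1 := htail (k - m)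
    have e2 := htail (k - m + w.length)
    rw [show m + (k - m) = k from by omega] at e1
    rw [show m + (k - m + w.length) = k + w.length from by omega] at e2
    rw [e1, e2, hwval, hwval]
    congr 1
    apply Fin.ext
    show (n0 + (k - m + w.length)) % w.length = (n0 + (k - m)) % w.length
    rw [show n0 + (k - m + w.length) = (n0 + (k - m)) + w.length from by omega,
        Nat.add_mod_right]
  exact pth_not_periodic (f := G.src) g h hgne hhne hgnd hhnd hne w.length m hL hper
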